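/- Let T ≥ 3 and 1/2 ≤ σ ≤ 1. Then ∑_{p > T, p prime} p^{-σ} e^{-p/T} ≪ (T^{1-σ} - 1)/((1-σ) log T) + log log T, with an absolute implied constant (and the convention (T^{1-σ}-1)/(1-σ) = log T at σ = 1). -/

import Mathlib

open Finset
open scoped ENNReal

/-- Chebyshev-type bound from `primorial ≤ 4^n`. -/
lemma cheb_count_aux (A : ℝ) (hA : 3 ≤ A) :
    ((((Finset.range (⌊2*A⌋₊ + 1)).filter (fun n : ℕ => n.Prime ∧ A < (n:ℝ))).card : ℝ))
      * Real.log A ≤ 2 * Real.log 4 * A := by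
  set m := ⌊2*A⌋₊ with hm
  set F := (Finset.range (m + 1)).filter (fun n : ℕ => n.Prime ∧ A < (n:ℝ)) with hF
  have hA0 : (0:ℝ) < A := by linarith
  have h1 : A ^ F.card ≤ ∏ p ∈ F, (p:ℝ) := by
    rw [← Finset.prod_const]
    apply Finset.prod_le_prod (fun _ _ => hA0.le)
    intro x hx
    rw [hF, Finset.mem_filter] at hx
    exact hx.2.2.le
  have h2 : (∏ p ∈ F, (p:ℝ)) = ((∏ p ∈ F, p : ℕ) : ℝ) := by push_cast; rfl
  have h3 : (∏ p ∈ F, p) ≤ primorial m := by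
    rw [primorial]
    apply Finset.prod_le_prod_of_subset_of_one_le'
    · intro x hx
      rw [hF, Finset.mem_filter] at hx
      exact Finset.mem_filter.mpr ⟨hx.1, hx.2.1⟩
    · intro i hi _
      exact (Finset.mem_filter.mp hi).2.one_lt.le
  have h4 : primorial m ≤ 4 ^ m := primorial_le_4_pow m
  have h5 : ((4:ℕ) ^ m : ℝ) ≤ (4:ℝ) ^ (2*A) := by
    push_cast
    rw [show ((4:ℝ) ^ m) = (4:ℝ) ^ (m:ℝ) by rw [Real.rpow_natCast]]
    apply Real.rpow_le_rpow_of_exponent_le (by norm_num)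
    exact Nat.floor_le (by linarith)
  have hchain : A ^ F.card ≤ (4:ℝ) ^ (2*A) := by
    calc A ^ F.card ≤ ∏ p ∈ F, (p:ℝ) := h1
    _ = ((∏ p ∈ F, p : ℕ) : ℝ) := h2
    _ ≤ ((4:ℕ) ^ m : ℝ) := by exact_mod_cast h3.trans h4
    _ ≤ (4:ℝ) ^ (2*A) := h5
  have hlog := Real.log_le_log (by positivity) hchain
  rw [Real.log_pow, Real.log_rpow (by norm_num)] at hlog
  linarith

/-- Main estimate: the prime tail sum is at most `12·T^{1-σ}/log T`. -/
lemma tail_bound_aux (σ T : ℝ) (hσ : 1/2 ≤ σ) (hσ1 : σ ≤ 1) (hT : 3 ≤ T) :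
    (∑' p : {p : ℕ // p.Prime ∧ T < (p : ℝ)},
        ((p : ℕ) : ℝ) ^ (-σ) * Real.exp (-(((p : ℕ) : ℝ)) / T))
      ≤ 12 * T ^ (1 - σ) / Real.log T := by
  classical
  have hT0 : (0:ℝ) < T := by linarith
  have hlogT : 1 ≤ Real.log T := by
    rw [Real.le_log_iff_exp_le hT0]
    have := Real.exp_one_lt_d9
    linarith
  have hlogTpos : 0 < Real.log T := by linarith
  set P : Set ℕ := {n : ℕ | n.Prime ∧ T < (n:ℝ)} with hP
  set f : ℕ → ℝ := fun n => ((n : ℕ) : ℝ) ^ (-σ) * Real.exp (-((n : ℕ) : ℝ) / T) with hf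
  have hfnonneg : ∀ n : ℕ, 0 ≤ f n := fun n =>
    mul_nonneg (Real.rpow_nonneg (Nat.cast_nonneg n) _) (Real.exp_pos _).le
  -- summability
  have hrT : Real.exp (-(1/T)) < 1 := by
    have h1T : (0:ℝ) < 1/T := by positivity
    rw [Real.exp_lt_one_iff]
    linarith
  have hgeo : Summable (fun n : ℕ => Real.exp (-(1/T)) ^ n) :=
    summable_geometric_of_lt_one (Real.exp_pos _).le hrT
  have hexpn : ∀ n : ℕ, Real.exp (-(n:ℝ) / T) = Real.exp (-(1/T)) ^ n := by
    intro n
    rw [← Real.exp_nat_mul]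
    congr 1
    ring
  have hle : ∀ n : ℕ, 1 ≤ n → f n ≤ Real.exp (-(1/T)) ^ n := by
    intro n hn
    have h1 : (1:ℝ) ≤ (n:ℝ) := by exact_mod_cast hn
    have h2 : ((n:ℕ):ℝ) ^ (-σ) ≤ 1 :=
      Real.rpow_le_one_of_one_le_of_nonpos h1 (by linarith)
    calc f n ≤ 1 * Real.exp (-(n:ℝ)/T) := by
          apply mul_le_mul_of_nonneg_right h2 (Real.exp_pos _).le
      _ = Real.exp (-(1/T)) ^ n := by rw [one_mul, hexpn]
  have hsum : Summable (fun p : ↥P => f ↑p) := by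
    apply Summable.of_nonneg_of_le (fun p => hfnonneg _) _ (hgeo.subtype P)
    intro p
    exact hle p.1 (p.2.1.one_lt.le)
  -- pass to ℝ≥0∞
  have hRnn : (0:ℝ) ≤ 12 * T ^ (1 - σ) / Real.log T := by positivity
  have goal' : (∑' p : ↥P, f ↑p) ≤ 12 * T ^ (1 - σ) / Real.log T := by
    rw [← ENNReal.ofReal_le_ofReal_iff hRnn,
      ENNReal.ofReal_tsum_of_nonneg (fun p => hfnonneg _) hsum]
    have hts : (∑' p : ↥P, ENNReal.ofReal (f ↑p))
        = ∑' n : ℕ, P.indicator (fun n => ENNReal.ofReal (f n)) n :=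
      tsum_subtype P (fun n => ENNReal.ofReal (f n))
    rw [hts]
    set G : ℕ → ℝ≥0∞ := fun n => P.indicator (fun n => ENNReal.ofReal (f n)) n with hG
    set b : ℕ → ℝ := fun k =>
      (2 * Real.log 4 * T ^ (1 - σ) / Real.log T) * (2 * Real.exp (-1)) ^ k with hb
    -- covering by dyadic blocks
    have cover : ∀ n : ℕ, n ∈ P → ∃ k : ℕ, T * 2^k < (n:ℝ) ∧ (n:ℝ) ≤ T * 2^(k+1) := by
      intro n hn
      have hex : ∃ k : ℕ, (n:ℝ) ≤ T * 2^(k+1) := by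
        refine ⟨n, ?_⟩
        have h2n : (n:ℝ) ≤ 2^(n+1) := by
          exact_mod_cast (Nat.lt_two_pow_self (n := n)).le.trans (Nat.pow_le_pow_right (by norm_num) (Nat.le_succ n))
        have hp : (0:ℝ) < 2^(n+1) := by positivity
        nlinarith
      refine ⟨Nat.find hex, ?_, Nat.find_spec hex⟩
      rcases Nat.eq_zero_or_pos (Nat.find hex) with h0 | hpos
      · rw [h0]
        simpa using hn.2
      · have hmin := Nat.find_min hex (show Nat.find hex - 1 < Nat.find hex from
          Nat.sub_lt hpos one_pos)
        push_neg at hmin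
        rwa [Nat.sub_add_cancel hpos] at hmin
    have claim1 : ∀ n : ℕ, G n ≤ ∑' k : ℕ,
        (if T * 2^k < (n:ℝ) ∧ (n:ℝ) ≤ T * 2^(k+1) then G n else 0) := by
      intro n
      by_cases hn : n ∈ P
      · obtain ⟨k, hk1, hk2⟩ := cover n hn
        calc G n = (if T * 2^k < (n:ℝ) ∧ (n:ℝ) ≤ T * 2^(k+1) then G n else 0) := by
              rw [if_pos ⟨hk1, hk2⟩]
          _ ≤ _ := ENNReal.le_tsum k
      · have : G n = 0 := Set.indicator_of_notMem hn _
        rw [this]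
        exact zero_le
    have claim2 : ∀ k : ℕ, (∑' n : ℕ,
        (if T * 2^k < (n:ℝ) ∧ (n:ℝ) ≤ T * 2^(k+1) then G n else 0))
          ≤ ENNReal.ofReal (b k) := by
      intro k
      set A : ℝ := T * 2^k with hA
      have h2k1 : (1:ℝ) ≤ 2^k := one_le_pow₀ (by norm_num)
      have hA3 : 3 ≤ A := by nlinarith
      have hA0 : (0:ℝ) < A := by linarith
      have h2A : T * 2^(k+1) = 2 * A := by rw [hA, pow_succ]; ring
      set F := (Finset.range (⌊2*A⌋₊ + 1)).filter (fun n : ℕ => n.Prime ∧ A < (n:ℝ)) with hF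
      have hsupp : ∀ n : ℕ, n ∉ F →
          (if T * 2^k < (n:ℝ) ∧ (n:ℝ) ≤ T * 2^(k+1) then G n else 0) = 0 := by
        intro n hnF
        by_contra hne
        have hcond : T * 2^k < (n:ℝ) ∧ (n:ℝ) ≤ T * 2^(k+1) := by
          by_contra hc
          rw [if_neg hc] at hne
          exact hne rfl
        rw [if_pos hcond] at hne
        have hnP : n ∈ P := by
          by_contra hp
          exact hne (by rw [hG]; exact Set.indicator_of_notMem hp _)
        apply hnF
        rw [hF]
        refine Finset.mem_filter.mpr ⟨?_, hnP.1, hcond.1⟩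
        rw [Finset.mem_range, Nat.lt_succ_iff]
        apply Nat.le_floor
        rw [← h2A]
        exact hcond.2
      have hterm : ∀ n ∈ F, (if T * 2^k < (n:ℝ) ∧ (n:ℝ) ≤ T * 2^(k+1) then G n else 0)
          ≤ ENNReal.ofReal (A ^ (-σ) * Real.exp (-(2:ℝ)^k)) := by
        intro n _
        by_cases hcond : T * 2^k < (n:ℝ) ∧ (n:ℝ) ≤ T * 2^(k+1)
        · rw [if_pos hcond]
          have hGle : G n ≤ ENNReal.ofReal (f n) := Set.indicator_le_self P _ n
          refine hGle.trans (ENNReal.ofReal_le_ofReal ?_)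
          have h1 : ((n:ℕ):ℝ) ^ (-σ) ≤ A ^ (-σ) :=
            Real.rpow_le_rpow_of_nonpos hA0 hcond.1.le (by linarith)
          have h2 : Real.exp (-(n:ℝ)/T) ≤ Real.exp (-(2:ℝ)^k) := by
            apply Real.exp_le_exp.mpr
            rw [neg_div, neg_le_neg_iff]
            rw [le_div_iff₀ hT0]
            nlinarith [hcond.1]
          exact mul_le_mul h1 h2 (Real.exp_pos _).le (Real.rpow_nonneg hA0.le _)
        · rw [if_neg hcond]
          exact zero_le
      have hcardle : (F.card : ℝ) ≤ 2 * Real.log 4 * A / Real.log T := by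
        rw [le_div_iff₀ hlogTpos]
        have hlogA : Real.log T ≤ Real.log A := by
          apply Real.log_le_log hT0
          nlinarith
        calc (F.card : ℝ) * Real.log T ≤ (F.card : ℝ) * Real.log A := by
              apply mul_le_mul_of_nonneg_left hlogA (Nat.cast_nonneg _)
          _ ≤ 2 * Real.log 4 * A := by rw [hF]; exact cheb_count_aux A hA3
      have hreal : (F.card : ℝ) * (A ^ (-σ) * Real.exp (-(2:ℝ)^k)) ≤ b k := by
        have hlog4 : (0:ℝ) ≤ Real.log 4 := Real.log_nonneg (by norm_num)
        have hpow1 : ((2:ℝ)^k) ^ ((1:ℝ) - σ) ≤ (2:ℝ)^k := by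
          calc ((2:ℝ)^k) ^ ((1:ℝ) - σ) ≤ ((2:ℝ)^k) ^ (1:ℝ) :=
                Real.rpow_le_rpow_of_exponent_le h2k1 (by linarith)
            _ = (2:ℝ)^k := Real.rpow_one _
        have hexp1 : Real.exp (-(2:ℝ)^k) ≤ Real.exp (-1) ^ k := by
          rw [← Real.exp_nat_mul]
          apply Real.exp_le_exp.mpr
          have : (k:ℝ) ≤ (2:ℝ)^k := by
            exact_mod_cast (Nat.lt_two_pow_self (n := k)).le
          linarith [this]
        have hA1σ : A ^ ((1:ℝ) - σ) = T ^ ((1:ℝ) - σ) * ((2:ℝ)^k) ^ ((1:ℝ) - σ) := by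
          rw [hA, Real.mul_rpow hT0.le (by positivity)]
        have hAsplit : A * A ^ (-σ) = A ^ ((1:ℝ) - σ) := by
          rw [show (1:ℝ) - σ = 1 + (-σ) by ring, Real.rpow_add hA0, Real.rpow_one]
        have hTpow : (0:ℝ) ≤ T ^ ((1:ℝ) - σ) := Real.rpow_nonneg hT0.le _
        calc (F.card : ℝ) * (A ^ (-σ) * Real.exp (-(2:ℝ)^k))
            ≤ (2 * Real.log 4 * A / Real.log T) * (A ^ (-σ) * Real.exp (-(2:ℝ)^k)) := by
              apply mul_le_mul_of_nonneg_right hcardle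
              exact mul_nonneg (Real.rpow_nonneg hA0.le _) (Real.exp_pos _).le
          _ = (2 * Real.log 4 / Real.log T) * (A ^ ((1:ℝ) - σ)) * Real.exp (-(2:ℝ)^k) := by
              rw [← hAsplit]; ring
          _ = (2 * Real.log 4 / Real.log T) * (T ^ ((1:ℝ) - σ) * ((2:ℝ)^k) ^ ((1:ℝ) - σ))
              * Real.exp (-(2:ℝ)^k) := by rw [hA1σ]
          _ ≤ (2 * Real.log 4 / Real.log T) * (T ^ ((1:ℝ) - σ) * (2:ℝ)^k)
              * (Real.exp (-1) ^ k) := by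
              apply mul_le_mul
              · apply mul_le_mul_of_nonneg_left _ (by positivity)
                exact mul_le_mul_of_nonneg_left hpow1 hTpow
              · exact hexp1
              · exact (Real.exp_pos _).le
              · positivity
          _ = b k := by
              rw [hb]
              simp only []
              rw [mul_pow]
              ring
      calc (∑' n : ℕ, (if T * 2^k < (n:ℝ) ∧ (n:ℝ) ≤ T * 2^(k+1) then G n else 0))
          = ∑ n ∈ F, (if T * 2^k < (n:ℝ) ∧ (n:ℝ) ≤ T * 2^(k+1) then G n else 0) :=
            tsum_eq_sum hsupp
        _ ≤ F.card • ENNReal.ofReal (A ^ (-σ) * Real.exp (-(2:ℝ)^k)) :=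
            Finset.sum_le_card_nsmul F _ _ hterm
        _ = (F.card : ℝ≥0∞) * ENNReal.ofReal (A ^ (-σ) * Real.exp (-(2:ℝ)^k)) := by
            rw [nsmul_eq_mul]
        _ = ENNReal.ofReal ((F.card : ℝ) * (A ^ (-σ) * Real.exp (-(2:ℝ)^k))) := by
            rw [ENNReal.ofReal_mul (Nat.cast_nonneg _), ENNReal.ofReal_natCast]
        _ ≤ ENNReal.ofReal (b k) := ENNReal.ofReal_le_ofReal hreal
    -- sum the geometric bound
    have he1 : (2.7182818283 : ℝ) < Real.exp 1 := Real.exp_one_gt_d9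
    have hrpos : (0:ℝ) ≤ 2 * Real.exp (-1) := by positivity
    have hrlt : 2 * Real.exp (-1) < 1 := by
      rw [Real.exp_neg]
      rw [mul_inv_lt_iff₀ (Real.exp_pos 1)]
      linarith
    have hbnonneg : ∀ k : ℕ, 0 ≤ b k := by
      intro k
      apply mul_nonneg _ (pow_nonneg hrpos k)
      have : (0:ℝ) ≤ Real.log 4 := Real.log_nonneg (by norm_num)
      positivity
    have hbsum : Summable b := by
      rw [hb]
      exact (summable_geometric_of_lt_one hrpos hrlt).mul_left _
    have hlog4 : Real.log 4 ≤ 3/2 := by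
      rw [Real.log_le_iff_le_exp (by norm_num)]
      have h32 : Real.exp (3/2) ^ 2 = Real.exp 1 ^ 3 := by
        rw [← Real.exp_nat_mul, ← Real.exp_nat_mul]
        norm_num
      have hc : (16:ℝ) < Real.exp 1 ^ 3 := by
        calc (16:ℝ) < 2.7182818283 ^ 3 := by norm_num
          _ < Real.exp 1 ^ 3 := by
              apply pow_lt_pow_left₀ he1 (by norm_num) (by norm_num)
      nlinarith [Real.exp_pos (3/2 : ℝ)]
    have htsumb : ∑' k : ℕ, b k ≤ 12 * T ^ (1 - σ) / Real.log T := by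
      rw [hb, tsum_mul_left, tsum_geometric_of_lt_one hrpos hrlt]
      have hinv : (1 - 2 * Real.exp (-1))⁻¹ ≤ 4 := by
        have h14 : (1:ℝ)/4 ≤ 1 - 2 * Real.exp (-1) := by
          rw [Real.exp_neg]
          have : (2:ℝ) * (Real.exp 1)⁻¹ ≤ 3/4 := by
            rw [mul_inv_le_iff₀ (Real.exp_pos 1)]
            linarith
          linarith
        calc (1 - 2 * Real.exp (-1))⁻¹ ≤ ((1:ℝ)/4)⁻¹ := by
              apply inv_anti₀ (by norm_num) h14
          _ = 4 := by norm_num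
      have hcnn : (0:ℝ) ≤ 2 * Real.log 4 * T ^ (1 - σ) / Real.log T := by
        have : (0:ℝ) ≤ Real.log 4 := Real.log_nonneg (by norm_num)
        positivity
      calc 2 * Real.log 4 * T ^ (1 - σ) / Real.log T * (1 - 2 * Real.exp (-1))⁻¹
          ≤ 2 * Real.log 4 * T ^ (1 - σ) / Real.log T * 4 :=
            mul_le_mul_of_nonneg_left hinv hcnn
        _ ≤ 12 * T ^ (1 - σ) / Real.log T := by
            rw [div_mul_eq_mul_div, div_le_div_iff₀ hlogTpos hlogTpos]
            have hTpow : (0:ℝ) ≤ T ^ (1 - σ) := Real.rpow_nonneg hT0.le _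
            nlinarith [mul_le_mul_of_nonneg_right
              (mul_le_mul_of_nonneg_right hlog4 hTpow) hlogTpos.le]
    calc (∑' n : ℕ, G n)
        ≤ ∑' n : ℕ, ∑' k : ℕ,
            (if T * 2^k < (n:ℝ) ∧ (n:ℝ) ≤ T * 2^(k+1) then G n else 0) :=
          ENNReal.tsum_le_tsum claim1
      _ = ∑' k : ℕ, ∑' n : ℕ,
            (if T * 2^k < (n:ℝ) ∧ (n:ℝ) ≤ T * 2^(k+1) then G n else 0) :=
          ENNReal.tsum_comm
      _ ≤ ∑' k : ℕ, ENNReal.ofReal (b k) := ENNReal.tsum_le_tsum claim2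
      _ = ENNReal.ofReal (∑' k : ℕ, b k) :=
          (ENNReal.ofReal_tsum_of_nonneg hbnonneg hbsum).symm
      _ ≤ ENNReal.ofReal (12 * T ^ (1 - σ) / Real.log T) :=
          ENNReal.ofReal_le_ofReal htsumb
  have heq : (∑' p : {p : ℕ // p.Prime ∧ T < (p : ℝ)},
      ((p : ℕ) : ℝ) ^ (-σ) * Real.exp (-(((p : ℕ) : ℝ)) / T)) = ∑' p : ↥P, f ↑p := rfl
  rw [heq]
  exact goal'

theorem prime_tail_sum_exp_weight_bound :
    ∃ C : ℝ, 0 < C ∧ ∀ σ T : ℝ, 1 / 2 ≤ σ → σ ≤ 1 → 3 ≤ T →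
      (∑' p : {p : ℕ // p.Prime ∧ T < (p : ℝ)},
          ((p : ℕ) : ℝ) ^ (-σ) * Real.exp (-(((p : ℕ) : ℝ)) / T))
        ≤ C * ((if σ = 1 then 1 else (T ^ (1 - σ) - 1) / ((1 - σ) * Real.log T))
            + Real.log (Real.log T)) := by
  refine ⟨64, by norm_num, ?_⟩
  intro σ T hσ hσ1 hT
  have hT0 : (0:ℝ) < T := by linarith
  have hlogT : 1 ≤ Real.log T := by
    rw [Real.le_log_iff_exp_le hT0]
    have := Real.exp_one_lt_d9
    linarith
  have hlogTpos : 0 < Real.log T := by linarith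
  have hloglog : 0 ≤ Real.log (Real.log T) := Real.log_nonneg hlogT
  refine (tail_bound_aux σ T hσ hσ1 hT).trans ?_
  by_cases hσe : σ = 1
  · rw [if_pos hσe, hσe]
    rw [show (1:ℝ) - 1 = 0 by ring, Real.rpow_zero]
    have h12 : 12 * (1:ℝ) / Real.log T ≤ 12 := by
      rw [mul_one, div_le_iff₀ hlogTpos]
      nlinarith
    linarith
  · rw [if_neg hσe]
    have hσlt : σ < 1 := lt_of_le_of_ne hσ1 hσe
    have ha : 0 < 1 - σ := by linarith
    have ha2 : 1 - σ ≤ 1/2 := by linarith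
    have hTpow1 : (1:ℝ) ≤ T ^ (1 - σ) := by
      have h := Real.rpow_le_rpow_of_exponent_le (show (1:ℝ) ≤ T by linarith)
        (show (0:ℝ) ≤ 1 - σ by linarith)
      rwa [Real.rpow_zero] at h
    have hfirst1 : (1:ℝ) ≤ (T ^ (1 - σ) - 1) / ((1 - σ) * Real.log T) := by
      rw [le_div_iff₀ (by positivity)]
      have := Real.log_le_sub_one_of_pos (show (0:ℝ) < T ^ (1-σ) by positivity)
      rw [Real.log_rpow hT0] at this
      linarith
    by_cases hbig : T ^ (1 - σ) ≤ 2
    · have h24 : 12 * T ^ (1 - σ) / Real.log T ≤ 24 := by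
        rw [div_le_iff₀ hlogTpos]
        nlinarith
      nlinarith
    · push_neg at hbig
      have hkey : 12 * T ^ (1 - σ) / Real.log T
          ≤ 64 * ((T ^ (1 - σ) - 1) / ((1 - σ) * Real.log T)) := by
        rw [← mul_div_assoc, div_le_div_iff₀ hlogTpos (by positivity)]
        nlinarith [mul_nonneg (mul_nonneg (show (0:ℝ) ≤ T ^ (1-σ) - 2 by linarith)
            (show (0:ℝ) ≤ 1 - σ by linarith)) hlogTpos.le,
          mul_nonneg (mul_nonneg (show (0:ℝ) ≤ 1/2 - (1 - σ) by linarith)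
            (show (0:ℝ) ≤ T ^ (1-σ) by linarith)) hlogTpos.le,
          mul_nonneg (show (0:ℝ) ≤ T ^ (1-σ) - 2 by linarith) hlogTpos.le]
      nlinarith
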